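/- For a symmetric (2n)-core partition λ whose balanced flush abacus on 2n runners has its largest (highest-level) bead located at level ℓ of runner i (with 1 ≤ i ≤ 2n), the first part of λ equals 2n(ℓ−1) + i. -/

import Mathlib

/-! Flush abaci with `r` runners, recorded by the level of the lowest bead on each runner
(runners 0-indexed by `Fin r`; entry at level `m` of runner `i` has value `m*(r+1) + (i+1)`). -/

/-- A balanced abacus on `2n` runners: the levels of symmetric runners sum to zero. -/
def BalancedAbacus (n : ℕ) (a : Fin (2*n) → ℤ) : Prop := ∀ i, a i + a i.rev = 0

/-- `v` is the value of a bead of the flush abacus `a` on `r` runners. -/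
def IsBead (r : ℕ) (a : Fin r → ℤ) (v : ℤ) : Prop :=
  ∃ i : Fin r, v % (r+1) = (i : ℤ) + 1 ∧ v ≤ (r+1) * a i + ((i : ℤ) + 1)

/-- `v` is the value of a gap (a non-bead entry) of the abacus `a`. -/
def IsGap (r : ℕ) (a : Fin r → ℤ) (v : ℤ) : Prop :=
  v % (r+1) ≠ 0 ∧ ¬ IsBead r a v

/-- The core partition of the abacus `a`: row `j` (0-indexed) is the number of gaps smaller
(in reading order) than the bead having exactly `j` beads above it. -/
noncomputable def abacusCore (r : ℕ) (a : Fin r → ℤ) : ℕ → ℕ := fun j =>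
  Nat.card {g : ℤ | IsGap r a g ∧ ∃ b : ℤ, IsBead r a b ∧
    Nat.card {b' : ℤ | IsBead r a b' ∧ b < b'} = j ∧ g < b}

/-- Level of runner `i` (0 for an out-of-range index). -/
def aget (r : ℕ) (a : Fin r → ℤ) (i : ℕ) : ℤ := if h : i < r then a ⟨i, h⟩ else 0

/-- The (0-indexed) position of the rightmost runner whose lowest bead is at the highest level. -/
noncomputable def largestRunner (r : ℕ) (a : Fin r → ℤ) : ℕ :=
  sSup {i : ℕ | ∃ h : i < r, ∀ i', a i' ≤ a ⟨i, h⟩}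

def swapIdx (p q x : ℕ) : ℕ := if x = p then q else if x = q then p else x

/-- Action of the Coxeter generator `s_t` (`0 ≤ t ≤ n`) of the affine Weyl group of type `Cₙ`
on balanced flush abaci, in terms of the level vector. -/
def genAct (n : ℕ) (t : ℕ) (a : Fin (2*n) → ℤ) : Fin (2*n) → ℤ := fun x =>
  if t = 0 then
    if x.val = 0 then aget (2*n) a (2*n-1) + 1
    else if x.val = 2*n-1 then aget (2*n) a 0 - 1
    else a x
  else if t = n then aget (2*n) a (swapIdx (n-1) n x.val)
  else aget (2*n) a (swapIdx (t-1) t (swapIdx (2*n-1-t) (2*n-t) x.val))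

/-- Apply a word in the generators to an abacus, leftmost letter first. -/
def applyWord (n : ℕ) (w : List ℕ) (a : Fin (2*n) → ℤ) : Fin (2*n) → ℤ :=
  w.foldl (fun b t => genAct n t b) a

/-- Coxeter length of the minimal coset representative corresponding to the abacus `a`:
the least length of a word in the generators carrying `a` to the identity abacus. -/
noncomputable def abacusLen (n : ℕ) (a : Fin (2*n) → ℤ) : ℕ :=
  sInf {ℓ : ℕ | ∃ w : List ℕ, (∀ t ∈ w, t ≤ n) ∧ applyWord n w a = 0 ∧ w.length = ℓ}

def skipTwo (p q t : ℕ) : ℕ := if t < p then t else if t + 1 < q then t + 1 else t + 2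

/-- Delete runner `j` and its symmetric runner `2n-1-j` from a balanced abacus on `2n` runners
(assuming `2n-1-j < j`), keeping the remaining runners in order with their levels. -/
def deleteRunners (n : ℕ) (a : Fin (2*n) → ℤ) (j : ℕ) : Fin (2*(n-1)) → ℤ :=
  fun t => aget (2*n) a (skipTwo (2*n-1-j) j t.val)

/-- Delete the single runner `j` from an abacus on `r` runners. -/
def deleteOne (r : ℕ) (a : Fin r → ℤ) (j : ℕ) : Fin (r-1) → ℤ :=
  fun t => aget r a (if t.val < j then t.val else t.val + 1)

/-- If the largest bead of a balanced flush abacus on `2n` runners lies at level `ℓ` of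
runner `i` (1-indexed, `1 ≤ i ≤ 2n`), then the first part of the associated symmetric
`2n`-core equals `2n(ℓ-1) + i`. -/
lemma bead_iff (r : ℕ) (a : Fin r → ℤ) (v : ℤ) (j : Fin r)
    (hv : v % ((r:ℤ)+1) = (j:ℤ)+1) :
    IsBead r a v ↔ v ≤ ((r:ℤ)+1) * a j + ((j:ℤ)+1) := by
  constructor
  · rintro ⟨j', hv', hle'⟩
    have hjj : j' = j := by apply Fin.ext; omega
    subst hjj; exact hle'
  · intro h; exact ⟨j, hv, h⟩

lemma runner_bead (r : ℕ) (a : Fin r → ℤ) (j : Fin r) :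
    IsBead r a (((r:ℤ)+1) * a j + ((j:ℤ)+1)) := by
  have hj2 : ((j:ℤ)+1) < (r:ℤ)+1 := by have := j.isLt; omega
  have hmod : (((r:ℤ)+1) * a j + ((j:ℤ)+1)) % ((r:ℤ)+1) = (j:ℤ)+1 := by
    rw [add_comm, Int.add_mul_emod_self_left, Int.emod_eq_of_lt (by positivity) hj2]
  exact ⟨j, hmod, le_refl _⟩

lemma gap_iff (r : ℕ) (a : Fin r → ℤ) (v : ℤ) :
    IsGap r a v ↔ ∃ j : Fin r, v % ((r:ℤ)+1) = (j:ℤ)+1 ∧ ((r:ℤ)+1) * a j + ((j:ℤ)+1) < v := by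
  constructor
  · rintro ⟨h0, hnb⟩
    have h1 : 0 ≤ v % ((r:ℤ)+1) := Int.emod_nonneg v (by positivity)
    have h2 : v % ((r:ℤ)+1) < (r:ℤ)+1 := Int.emod_lt_of_pos v (by positivity)
    have hjlt : (v % ((r:ℤ)+1) - 1).toNat < r := by omega
    have hmod : v % ((r:ℤ)+1) = ((⟨(v % ((r:ℤ)+1) - 1).toNat, hjlt⟩ : Fin r) : ℤ)+1 := by
      show v % ((r:ℤ)+1) = ((v % ((r:ℤ)+1) - 1).toNat : ℤ) + 1
      omega
    refine ⟨_, hmod, ?_⟩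
    by_contra hle
    push_neg at hle
    exact hnb ((bead_iff r a v _ hmod).mpr hle)
  · rintro ⟨j, hmod, hgt⟩
    refine ⟨by omega, ?_⟩
    intro hb
    have := (bead_iff r a v j hmod).mp hb
    omega

lemma modval (r : ℕ) (j : Fin r) (m : ℤ) :
    (m * ((r:ℤ)+1) + ((j:ℤ)+1)) % ((r:ℤ)+1) = (j:ℤ)+1 := by
  rw [mul_comm, add_comm, Int.add_mul_emod_self_left]
  exact Int.emod_eq_of_lt (by positivity) (by have := j.isLt; omega)

lemma main_count (r : ℕ) (hr : 0 < r) (a : Fin r → ℤ)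
    (hsum : ∑ j, a j = 0) (ℓ : ℤ) (i : ℕ) (hi1 : 1 ≤ i) (hi2 : i ≤ r)
    (hbead : IsBead r a (((r:ℤ)+1) * ℓ + i))
    (hmax : ∀ v : ℤ, IsBead r a v → v ≤ ((r:ℤ)+1) * ℓ + i) :
    (abacusCore r a 0 : ℤ) = r*(ℓ-1) + i := by
  classical
  have hNpos : (0:ℤ) < (r:ℤ)+1 := by positivity
  have hmax' : ∀ j : Fin r, ((r:ℤ)+1) * a j + ((j:ℤ)+1) ≤ ((r:ℤ)+1) * ℓ + i :=
    fun j => hmax _ (runner_bead r a j)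
  have hBmod : (((r:ℤ)+1) * ℓ + i) % ((r:ℤ)+1) = (i:ℤ) := by
    rw [add_comm, Int.add_mul_emod_self_left,
      Int.emod_eq_of_lt (by positivity) (by omega)]
  have hbead' := hbead
  obtain ⟨i₀, hmod₀, hle₀⟩ := hbead
  have hi₀ : ((i₀:ℕ):ℤ) + 1 = i := by rw [hBmod] at hmod₀; omega
  have ha₀ : a i₀ = ℓ := by
    have h2 : a i₀ ≤ ℓ := le_of_mul_le_mul_left (by linarith [hmax' i₀]) hNpos
    have h3 : ℓ ≤ a i₀ := le_of_mul_le_mul_left (by linarith [hle₀]) hNpos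
    omega
  have hub : ∀ j : Fin r, (j:ℕ)+1 ≠ i → a j ≤ (if (j:ℕ)+1 < i then ℓ else ℓ-1) := by
    intro j hne
    have h1 := hmax' j
    have hj0 : (0:ℤ) ≤ ((j:ℕ):ℤ) := Int.natCast_nonneg _
    have hia : (i:ℤ) ≤ (r:ℤ) := by exact_mod_cast hi2
    by_cases hc : (j:ℕ)+1 < i
    · rw [if_pos hc]
      have h2 : ((r:ℤ)+1) * a j < ((r:ℤ)+1) * (ℓ+1) := by
        have hexp : ((r:ℤ)+1) * (ℓ+1) = ((r:ℤ)+1) * ℓ + ((r:ℤ)+1) := by ring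
        linarith
      have := lt_of_mul_lt_mul_left h2 (le_of_lt hNpos)
      omega
    · rw [if_neg hc]
      have hcc : (i:ℤ) < ((j:ℕ):ℤ)+1 := by omega
      have h2 : ((r:ℤ)+1) * a j < ((r:ℤ)+1) * ℓ := by linarith
      have := lt_of_mul_lt_mul_left h2 (le_of_lt hNpos)
      omega
  set F : Finset ℤ := Finset.univ.biUnion
    (fun j : Fin r => (Finset.Ioc (a j) (if (j:ℕ)+1 < i then ℓ else ℓ-1)).image
      (fun m => m * ((r:ℤ)+1) + ((j:ℤ)+1))) with hF
  -- membership characterization of F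
  have hmemF : ∀ g : ℤ, g ∈ F ↔ ∃ j : Fin r, ∃ m : ℤ,
      a j < m ∧ m ≤ (if (j:ℕ)+1 < i then ℓ else ℓ-1) ∧ g = m * ((r:ℤ)+1) + ((j:ℤ)+1) := by
    intro g
    rw [hF, Finset.mem_biUnion]
    constructor
    · rintro ⟨j, -, hmem⟩
      obtain ⟨m, hm, rfl⟩ := Finset.mem_image.mp hmem
      rw [Finset.mem_Ioc] at hm
      exact ⟨j, m, hm.1, hm.2, rfl⟩
    · rintro ⟨j, m, h1, h2, rfl⟩
      exact ⟨j, Finset.mem_univ _, Finset.mem_image.mpr ⟨m, Finset.mem_Ioc.mpr ⟨h1, h2⟩, rfl⟩⟩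
  -- elements of F are less than B
  have hltB : ∀ g ∈ F, g < ((r:ℤ)+1) * ℓ + i := by
    intro g hg
    obtain ⟨j, m, h1, h2, rfl⟩ := (hmemF g).mp hg
    have hj0 : (0:ℤ) ≤ ((j:ℕ):ℤ) := Int.natCast_nonneg _
    have hjr : ((j:ℕ):ℤ) < (r:ℤ) := by exact_mod_cast j.isLt
    have hi0 : (1:ℤ) ≤ (i:ℤ) := by exact_mod_cast hi1
    by_cases hc : (j:ℕ)+1 < i
    · rw [if_pos hc] at h2
      have hci : ((j:ℕ):ℤ)+1 < (i:ℤ) := by exact_mod_cast hc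
      have := mul_le_mul_of_nonneg_right h2 (le_of_lt hNpos)
      linarith
    · rw [if_neg hc] at h2
      have := mul_le_mul_of_nonneg_right h2 (le_of_lt hNpos)
      have hexp : (ℓ-1) * ((r:ℤ)+1) = ℓ * ((r:ℤ)+1) - ((r:ℤ)+1) := by ring
      nlinarith
  -- the set in abacusCore equals F
  have hempty : {b' : ℤ | IsBead r a b' ∧ ((r:ℤ)+1)*ℓ+(i:ℤ) < b'} = ∅ := by
    ext b'
    simp only [Set.mem_setOf_eq, Set.mem_empty_iff_false, iff_false, not_and, not_lt]
    exact fun hb => hmax b' hb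
  have hset : {g : ℤ | IsGap r a g ∧ ∃ b : ℤ, IsBead r a b ∧
      Nat.card {b' : ℤ | IsBead r a b' ∧ b < b'} = 0 ∧ g < b} = (F : Set ℤ) := by
    ext g
    simp only [Set.mem_setOf_eq, Finset.mem_coe]
    constructor
    · rintro ⟨hg, b, hb, hcard, hgb⟩
      have hgB : g < ((r:ℤ)+1)*ℓ + i := lt_of_lt_of_le hgb (hmax b hb)
      obtain ⟨j, hmod, hgt⟩ := (gap_iff r a g).mp hg
      have hdecomp : g = (g / ((r:ℤ)+1)) * ((r:ℤ)+1) + ((j:ℤ)+1) := by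
        have h := Int.mul_ediv_add_emod g ((r:ℤ)+1)
        rw [hmod] at h
        linarith
      set m : ℤ := g / ((r:ℤ)+1) with hm
      have hm1 : a j < m := by
        have h2 : ((r:ℤ)+1) * a j < ((r:ℤ)+1) * m := by
          have : ((r:ℤ)+1) * a j + ((j:ℤ)+1) < m * ((r:ℤ)+1) + ((j:ℤ)+1) := by
            rw [← hdecomp]; exact hgt
          linarith
        exact lt_of_mul_lt_mul_left h2 (le_of_lt hNpos)
      have hj0 : (0:ℤ) ≤ ((j:ℕ):ℤ) := Int.natCast_nonneg _
      have hia : (i:ℤ) ≤ (r:ℤ) := by exact_mod_cast hi2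
      have hm2 : m ≤ (if (j:ℕ)+1 < i then ℓ else ℓ-1) := by
        have hgB' : m * ((r:ℤ)+1) + ((j:ℤ)+1) < ((r:ℤ)+1)*ℓ + i := by
          rw [← hdecomp]; exact hgB
        by_cases hc : (j:ℕ)+1 < i
        · rw [if_pos hc]
          have h2 : m * ((r:ℤ)+1) < (ℓ+1) * ((r:ℤ)+1) := by
            have hexp : (ℓ+1) * ((r:ℤ)+1) = ℓ*((r:ℤ)+1) + ((r:ℤ)+1) := by ring
            linarith
          have := lt_of_mul_lt_mul_right h2 (le_of_lt hNpos)
          omega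
        · rw [if_neg hc]
          have hcc : (i:ℤ) ≤ ((j:ℕ):ℤ)+1 := by omega
          have h2 : m * ((r:ℤ)+1) < ℓ * ((r:ℤ)+1) := by linarith
          have := lt_of_mul_lt_mul_right h2 (le_of_lt hNpos)
          omega
      exact (hmemF g).mpr ⟨j, m, hm1, hm2, hdecomp⟩
    · intro hgF
      obtain ⟨j, m, h1, h2, rfl⟩ := (hmemF _).mp hgF
      have hmod := modval r j m
      refine ⟨(gap_iff r a _).mpr ⟨j, hmod, ?_⟩, ((r:ℤ)+1)*ℓ + i, hbead', ?_, hltB _ hgF⟩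
      · have := mul_lt_mul_of_pos_left h1 hNpos
        linarith
      · rw [hempty]
        simp
  -- card of F
  have hinj : ∀ j : Fin r, Function.Injective (fun m : ℤ => m * ((r:ℤ)+1) + ((j:ℤ)+1)) := by
    intro j x y hxy
    simp only at hxy
    have : x * ((r:ℤ)+1) = y * ((r:ℤ)+1) := by linarith
    exact mul_right_cancel₀ (by positivity) this
  have hcardF : F.card = ∑ j : Fin r, ((if (j:ℕ)+1 < i then ℓ else ℓ-1) - a j).toNat := by
    rw [hF, Finset.card_biUnion]
    · exact Finset.sum_congr rfl (fun j _ => by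
        rw [Finset.card_image_of_injective _ (hinj j), Int.card_Ioc])
    · intro j _ k _ hjk
      rw [Function.onFun, Finset.disjoint_left]
      intro x hxj hxk
      obtain ⟨m, -, hm⟩ := Finset.mem_image.mp hxj
      obtain ⟨m', -, hm'⟩ := Finset.mem_image.mp hxk
      apply hjk
      apply Fin.ext
      have e1 : x % ((r:ℤ)+1) = (j:ℤ)+1 := by rw [← hm]; exact modval r j m
      have e2 : x % ((r:ℤ)+1) = (k:ℤ)+1 := by rw [← hm']; exact modval r k m'
      omega
  -- abacusCore equals card F
  have hcore : abacusCore r a 0 = F.card := by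
    show Nat.card {g : ℤ | IsGap r a g ∧ ∃ b : ℤ, IsBead r a b ∧
      Nat.card {b' : ℤ | IsBead r a b' ∧ b < b'} = 0 ∧ g < b} = F.card
    rw [hset, Nat.card_coe_set_eq, Set.ncard_coe_finset]
  rw [hcore, hcardF, Nat.cast_sum]
  have step : ∀ j ∈ (Finset.univ : Finset (Fin r)),
      ((((if (j:ℕ)+1 < i then ℓ else ℓ-1) - a j).toNat : ℤ))
      = ((if (j:ℕ)+1 < i then ℓ else ℓ-1) - a j) + (if (j:ℕ)+1 = i then 1 else 0) := by
    intro j _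
    by_cases hc : (j:ℕ)+1 = i
    · have hc2 : ¬((j:ℕ)+1 < i) := by omega
      have hij : j = i₀ := by apply Fin.ext; omega
      rw [if_neg hc2, if_pos hc, hij, ha₀]
      have he : ℓ - 1 - ℓ = -1 := by ring
      rw [he]
      norm_num
    · rw [if_neg hc, add_zero, Int.toNat_of_nonneg (by have := hub j hc; omega)]
  rw [Finset.sum_congr rfl step, Finset.sum_add_distrib, Finset.sum_sub_distrib, hsum, sub_zero]
  have hLsum : ∑ j : Fin r, (if (j:ℕ)+1 < i then ℓ else ℓ-1) = (r:ℤ)*(ℓ-1) + ((i:ℤ)-1) := by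
    have e : ∀ j ∈ (Finset.univ : Finset (Fin r)),
        (if (j:ℕ)+1 < i then ℓ else ℓ-1) = (ℓ-1) + (if (j:ℕ)+1 < i then (1:ℤ) else 0) := by
      intro j _
      by_cases hc : (j:ℕ)+1 < i <;> simp [hc]
    rw [Finset.sum_congr rfl e, Finset.sum_add_distrib, Finset.sum_const,
      Finset.card_univ, Fintype.card_fin, nsmul_eq_mul]
    congr 1
    rw [Fin.sum_univ_eq_sum_range (fun k => if k+1 < i then (1:ℤ) else 0) r,
      ← Finset.sum_filter]
    have hfe : (Finset.range r).filter (fun k => k+1 < i) = Finset.range (i-1) := by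
      ext k
      simp only [Finset.mem_filter, Finset.mem_range]
      omega
    rw [hfe, Finset.sum_const, Finset.card_range, nsmul_eq_mul, mul_one]
    omega
  have hIsum : ∑ j : Fin r, (if (j:ℕ)+1 = i then (1:ℤ) else 0) = 1 := by
    rw [Fin.sum_univ_eq_sum_range (fun k => if k+1 = i then (1:ℤ) else 0) r,
      ← Finset.sum_filter]
    have hfe : (Finset.range r).filter (fun k => k+1 = i) = {i-1} := by
      ext k
      simp only [Finset.mem_filter, Finset.mem_range, Finset.mem_singleton]
      omega
    rw [hfe, Finset.sum_singleton]
  rw [hLsum, hIsum]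
  ring

theorem stmt0 (n : ℕ) (hn : 1 ≤ n) (a : Fin (2*n) → ℤ) (hbal : BalancedAbacus n a)
    (ℓ : ℤ) (i : ℕ) (hi1 : 1 ≤ i) (hi2 : i ≤ 2*n)
    (hbead : IsBead (2*n) a ((2*n+1) * ℓ + i))
    (hmax : ∀ v : ℤ, IsBead (2*n) a v → v ≤ (2*n+1) * ℓ + i) :
    (abacusCore (2*n) a 0 : ℤ) = 2*n*(ℓ-1) + i := by
  have hsum : ∑ j : Fin (2*n), a j = 0 := by
    have h2 : ∑ j : Fin (2*n), a j.rev = ∑ j : Fin (2*n), a j :=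
      Fintype.sum_bijective Fin.rev Fin.rev_bijective _ _ (fun j => rfl)
    have h1 : ∑ j : Fin (2*n), (a j + a j.rev) = 0 :=
      Finset.sum_eq_zero (fun j _ => hbal j)
    rw [Finset.sum_add_distrib, h2] at h1
    linarith
  have hc : ((2*n:ℕ):ℤ)+1 = 2*(n:ℤ)+1 := by push_cast; ring
  have hmain := main_count (2*n) (by omega) a hsum ℓ i hi1 hi2
    (by rw [hc]; exact hbead) (by rw [hc]; exact hmax)
  rw [hmain]
  push_cast
  ring
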